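/- Let H be a spanning subgraph of a graph G and let φ_H be the signing of G with co-support H (φ_H(e)=1 if e ∈ E(H), φ_H(e)=-1 otherwise). Then the chromatic number of H with respect to G equals the chromatic number of the double covering G^{φ_H}. -/

import Mathlib

open SimpleGraph

attribute [local instance] Classical.propDecidable

variable {V : Type*}

/-- `f` is a proper coloring of `H`. -/
def IsProperColoring (H : SimpleGraph V) (f : V → ℕ) : Prop :=
  ∀ u v, H.Adj u v → f u ≠ f v

/-- `f` and `g` are compatible colorings of the spanning subgraph `H` with respect to `G`:
both are proper colorings of `H` and for every edge of `G` not in `H`, `f u ≠ g v`. -/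
def CompatiblePair (G H : SimpleGraph V) (f g : V → ℕ) : Prop :=
  IsProperColoring H f ∧ IsProperColoring H g ∧
    ∀ u v, G.Adj u v → ¬ H.Adj u v → f u ≠ g v

/-- The chromatic number of `H` with respect to `G`: the least `n` such that `H` admits a
pair of compatible colorings with colors `{0, …, n-1}`. -/
noncomputable def relChrom (G H : SimpleGraph V) : ℕ :=
  sInf {n | ∃ f g : V → ℕ, (∀ v, f v < n) ∧ (∀ v, g v < n) ∧ CompatiblePair G H f g}

/-- The (ordinary) chromatic number of a graph, as a natural number. -/
noncomputable def chrom (G : SimpleGraph V) : ℕ := sInf {n | G.Colorable n}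

/-- The Seidel switch `H_X` of a spanning subgraph `H` of `G` at a set `X` of vertices. -/
def seidelSwitch (G H : SimpleGraph V) (X : Set V) : SimpleGraph V :=
  SimpleGraph.fromRel fun u v =>
    ((u ∈ X ↔ v ∈ X) ∧ H.Adj u v) ∨ (¬(u ∈ X ↔ v ∈ X) ∧ G.Adj u v ∧ ¬ H.Adj u v)

/-- The co-support of a signing `φ` of `G`: the spanning subgraph whose edges are the
edges of `G` with sign `+1` (here, where `φ` holds). -/
def cosupport (G : SimpleGraph V) (φ : V → V → Prop) : SimpleGraph V :=
  SimpleGraph.fromRel fun u v => G.Adj u v ∧ φ u v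

/-- Switching of a signing at a vertex set `X`: the sign of an edge is reversed exactly
when the edge has exactly one endpoint in `X` (`True` plays the role of `+1`). -/
def switchSign (φ : V → V → Prop) (X : Set V) : V → V → Prop :=
  fun u v => φ u v ↔ (u ∈ X ↔ v ∈ X)

/-- The double covering `G^φ` of `G` determined by a signing `φ` (with `true ↔ +1`;
second coordinates agree along an edge iff the edge has sign `+1`). -/
def doubleCover (G : SimpleGraph V) (φ : V → V → Prop) : SimpleGraph (V × Bool) :=
  SimpleGraph.fromRel fun x y => G.Adj x.1 y.1 ∧ (x.2 = y.2 ↔ φ x.1 y.1)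

/-- The quotient graph `G/P` of a partition of the vertices given by the fibers of `c`. -/
def quotientGraph (G : SimpleGraph V) {ι : Type*} (c : V → ι) : SimpleGraph ι :=
  SimpleGraph.fromRel fun i j => ∃ u v : V, c u = i ∧ c v = j ∧ G.Adj u v

/-- The spanning subgraph of `G` consisting of the edges lying inside a single part of the
partition given by the fibers of `c` (the disjoint union of the induced subgraphs on parts). -/
def partsSubgraph (G : SimpleGraph V) {ι : Type*} (c : V → ι) : SimpleGraph V :=
  SimpleGraph.fromRel fun u v => G.Adj u v ∧ c u = c v

lemma dc_adj (G H : SimpleGraph V) (x y : V × Bool) :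
    (doubleCover G fun u v => H.Adj u v).Adj x y ↔
      G.Adj x.1 y.1 ∧ (x.2 = y.2 ↔ H.Adj x.1 y.1) := by
  simp only [doubleCover, SimpleGraph.fromRel_adj]
  constructor
  · rintro ⟨hne, h | h⟩
    · exact h
    · refine ⟨h.1.symm, ?_⟩
      rw [eq_comm, H.adj_comm] at h
      exact h.2
  · intro h
    refine ⟨?_, Or.inl h⟩
    rintro rfl
    exact G.irrefl h.1

/-- The chromatic number of a spanning subgraph `H` with respect to `G` equals the chromatic
number of the double covering of `G` determined by the signing with co-support `H`. -/
theorem chromatic_relative_eq_doubleCover [Fintype V] (G H : SimpleGraph V) (hH : H ≤ G) :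
    relChrom G H = chrom (doubleCover G fun u v => H.Adj u v) := by
  unfold relChrom chrom
  congr 1
  ext n
  simp only [Set.mem_setOf_eq]
  constructor
  · rintro ⟨f, g, hf, hg, hpf, hpg, hcomp⟩
    rw [SimpleGraph.colorable_iff_exists_bdd_nat_coloring]
    refine ⟨SimpleGraph.Coloring.mk (fun x => if x.2 then f x.1 else g x.1) ?_, ?_⟩
    · rintro ⟨u, a⟩ ⟨v, b⟩ hxy
      rw [dc_adj] at hxy
      obtain ⟨hGadj, hiff⟩ := hxy
      dsimp only at hGadj hiff ⊢
      cases a <;> cases b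
      · rw [if_neg (by simp), if_neg (by simp)]
        exact hpg u v (hiff.mp rfl)
      · rw [if_neg (by simp), if_pos rfl]
        exact fun he => hcomp v u hGadj.symm
          (fun h => by simpa using hiff.mpr h.symm) he.symm
      · rw [if_pos rfl, if_neg (by simp)]
        exact hcomp u v hGadj (fun h => by simpa using hiff.mpr h)
      · rw [if_pos rfl, if_pos rfl]
        exact hpf u v (hiff.mp rfl)
    · rintro ⟨v, b⟩
      cases b
      · show (if (false : Bool) = true then f v else g v) < n
        rw [if_neg (by simp)]; exact hg v
      · show (if (true : Bool) = true then f v else g v) < n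
        rw [if_pos rfl]; exact hf v
  · intro hcol
    rw [SimpleGraph.colorable_iff_exists_bdd_nat_coloring] at hcol
    obtain ⟨C, hC⟩ := hcol
    refine ⟨fun v => C (v, true), fun v => C (v, false), fun v => hC _, fun v => hC _,
      ?_, ?_, ?_⟩
    · intro u v huv
      exact C.valid ((dc_adj G H (u, true) (v, true)).mpr ⟨hH huv, by simpa using huv⟩)
    · intro u v huv
      exact C.valid ((dc_adj G H (u, false) (v, false)).mpr ⟨hH huv, by simpa using huv⟩)
    · intro u v hG hnH
      exact C.valid ((dc_adj G H (u, true) (v, false)).mpr ⟨hG, by simpa using hnH⟩)
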